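/- arXiv:1810.07993 — 4 statements merged into one kernel-verified Lean document; each statement's English description precedes it below -/
import Mathlib

section
/- Let T > 0, let A ∈ C¹([0,T]) with A(t) > 0 for all t ∈ [0,T], and suppose there is a constant B such that (d/dt)A(t) ≤ B·A(t)·ln(2 + A(t)) for all t ∈ [0,T]. Then A(t) ≤ (2 + A(0))^{e^{Bt}} for all t ∈ [0,T]. -/
open MeasureTheory Real Filter
open scoped ENNReal NNReal

noncomputable section

/-- Points of `d`-dimensional space (and of the torus `𝕋^d`, realized as
period-1 periodic functions on `ℝ^d`). -/
abbrev Vec (d : ℕ) := Fin d → ℝ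

/-- The fundamental domain `[0,1]^d` of the torus `𝕋^d`. -/
def unitCube (d : ℕ) : Set (Vec d) := Set.Icc 0 1

/-- A function on `ℝ^d` represents a function on the torus `𝕋^d` iff it has period `1`
in each coordinate direction. -/
def IsPeriodic {d : ℕ} (f : Vec d → ℝ) : Prop :=
  ∀ (x : Vec d) (j : Fin d), f (x + Pi.single j 1) = f x

def IsPeriodicVec {d : ℕ} (u : Vec d → Fin d → ℝ) : Prop :=
  ∀ i, IsPeriodic fun x => u x i

/-- The partial derivative `∂_j f`. -/
def pd {d : ℕ} (j : Fin d) (f : Vec d → ℝ) : Vec d → ℝ :=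
  fun x => fderiv ℝ f x (Pi.single j 1)

/-- The directional derivative `∂f/∂n = Σ_j n^j ∂_j f` along a constant vector `n`. -/
def dirDeriv {d : ℕ} (n : Vec d) (f : Vec d → ℝ) : Vec d → ℝ :=
  fun x => ∑ j, n j * pd j f x

/-- The Laplacian `Δ f = Σ_j ∂_j² f`. -/
def lap {d : ℕ} (f : Vec d → ℝ) : Vec d → ℝ :=
  fun x => ∑ j, pd j (pd j f) x

/-- The momentum `m = (1 - Δ) u` of a velocity field `u`. -/
def mom {d : ℕ} (u : Vec d → Fin d → ℝ) : Vec d → Fin d → ℝ :=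
  fun x i => u x i - lap (fun y => u y i) x

/-- The Euler–Poincaré equations
`∂_t m^i + Σ_j u^j ∂_j m^i + Σ_j m^j ∂_i u^j + m^i Σ_j ∂_j u^j = 0`, `m = (1-Δ)u`,
hold (pointwise, classically) at time `t`. -/
def EPEq {d : ℕ} (u : ℝ → Vec d → Fin d → ℝ) (t : ℝ) : Prop :=
  ∀ (x : Vec d) (i : Fin d),
    deriv (fun s => mom (u s) x i) t
      + (∑ j, u t x j * pd j (fun y => mom (u t) y i) x)
      + (∑ j, mom (u t) x j * pd i (fun y => u t y j) x)
      + mom (u t) x i * (∑ j, pd j (fun y => u t y j) x) = 0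

/-- Fourier coefficient on the torus: `f̂(ξ) = ∫_{[0,1]^d} f(x) e^{-2πi ξ·x} dx`, `ξ ∈ ℤ^d`. -/
def fourierCoeffT {d : ℕ} (f : Vec d → ℝ) (ξ : Fin d → ℤ) : ℂ :=
  ∫ x in unitCube d,
    (f x : ℂ) * Complex.exp (-(2 * (π : ℂ) * Complex.I) * ∑ j, (ξ j : ℂ) * (x j : ℂ))

/-- The Sobolev weight `(1 + |ξ|²)^s`. -/
def hsWeight (d : ℕ) (s : ℝ) (ξ : Fin d → ℤ) : ℝ :=
  (1 + ∑ j, ((ξ j : ℝ)) ^ 2) ^ s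

/-- Membership in the Sobolev space `H^s(𝕋^d)` (for a scalar function). -/
def MemHs {d : ℕ} (s : ℝ) (f : Vec d → ℝ) : Prop :=
  Summable fun ξ : Fin d → ℤ => hsWeight d s ξ * ‖fourierCoeffT f ξ‖ ^ 2

/-- The square of the `H^s(𝕋^d)` norm of a scalar function. -/
def hsNormSq {d : ℕ} (s : ℝ) (f : Vec d → ℝ) : ℝ :=
  ∑' ξ : Fin d → ℤ, hsWeight d s ξ * ‖fourierCoeffT f ξ‖ ^ 2

/-- Membership in `H^s(𝕋^d)` for a vector field. -/
def MemHsVec {d : ℕ} (s : ℝ) (u : Vec d → Fin d → ℝ) : Prop :=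
  ∀ i, MemHs s fun x => u x i

/-- The `H^s(𝕋^d)` norm of a vector field. -/
def hsNormVec {d : ℕ} (s : ℝ) (u : Vec d → Fin d → ℝ) : ℝ :=
  Real.sqrt (∑ i, hsNormSq s fun x => u x i)

/-- The squared `H¹` (energy) norm `∫_{𝕋^d} |u|² + |∇u|² dx` of a vector field. -/
def h1NormSq {d : ℕ} (u : Vec d → Fin d → ℝ) : ℝ :=
  ∫ x in unitCube d,
    ((∑ i, (u x i) ^ 2) + ∑ i, ∑ j, (pd j (fun y => u y i) x) ^ 2)

/-- The `H¹` (energy) norm `(∫_{𝕋^d} |u|² + |∇u|² dx)^{1/2}` of a vector field. -/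
def h1Norm {d : ℕ} (u : Vec d → Fin d → ℝ) : ℝ := Real.sqrt (h1NormSq u)

/-- `‖∇u‖_{L^∞(𝕋^d)}`: the sup over the torus of the Euclidean norm of `∇u`. -/
def gradSup {d : ℕ} (u : Vec d → Fin d → ℝ) : ℝ :=
  ⨆ x : unitCube d, Real.sqrt (∑ i, ∑ j, (pd j (fun y => u y i) (x : Vec d)) ^ 2)

/-- `u ∈ C(I; H^s(𝕋^d))`: each time slice belongs to `H^s` and `t ↦ u(t)` is continuous
into `H^s`. -/
def ContHs {d : ℕ} (s : ℝ) (I : Set ℝ) (u : ℝ → Vec d → Fin d → ℝ) : Prop :=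
  (∀ t ∈ I, MemHsVec s (u t)) ∧
    ∀ t₀ ∈ I,
      Filter.Tendsto (fun t => hsNormVec s fun x i => u t x i - u t₀ x i)
        (nhdsWithin t₀ I) (nhds 0)

/-- `u` is a solution of the periodic Euler–Poincaré equations with data `u₀`:
the equation holds (classically) on `Ieq`, and on `Icont` the solution is periodic
and belongs continuously to `H^k`. -/
def IsEPSol {d : ℕ} (k : ℝ) (Ieq Icont : Set ℝ) (u₀ : Vec d → Fin d → ℝ)
    (u : ℝ → Vec d → Fin d → ℝ) : Prop :=
  u 0 = u₀ ∧ (∀ t ∈ Ieq, EPEq u t) ∧ (∀ t ∈ Icont, IsPeriodicVec (u t)) ∧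
    ContHs k Icont u

/-- The real interval `[0, T)` for `T ∈ [0,∞]`. -/
def ivl (T : ℝ≥0∞) : Set ℝ := {t : ℝ | 0 ≤ t ∧ ENNReal.ofReal t < T}

/-- The real interval `(0, T)` for `T ∈ [0,∞]`. -/
def ivlEq (T : ℝ≥0∞) : Set ℝ := {t : ℝ | 0 < t ∧ ENNReal.ofReal t < T}

/-- `u` is the solution of the periodic Euler–Poincaré equations with data `u₀` on the
maximal existence interval `[0, T)`: it is a solution there, and there is no solution on
any strictly larger interval. -/
def MaximalEPSol {d : ℕ} (k : ℝ) (u₀ : Vec d → Fin d → ℝ)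
    (u : ℝ → Vec d → Fin d → ℝ) (T : ℝ≥0∞) : Prop :=
  IsEPSol k (ivlEq T) (ivl T) u₀ u ∧
    ∀ T' : ℝ≥0∞, T < T' →
      ¬∃ v : ℝ → Vec d → Fin d → ℝ, IsEPSol k (ivlEq T') (ivl T') u₀ v

/-- An admissible cutoff generating a Littlewood–Paley decomposition: `η` is smooth, even,
`[0,1]`-valued, supported in `{|ξ| ≤ 8/5}` and `≡ 1` on `{|ξ| ≤ 5/4}`. -/
structure LPCutoff where
  η : ℝ → ℝ
  smooth : ∀ n : ℕ, ContDiff ℝ n η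
  even : ∀ x, η (-x) = η x
  mem01 : ∀ x, η x ∈ Set.Icc (0 : ℝ) 1
  suppC : ∀ x : ℝ, 8 / 5 ≤ |x| → η x = 0
  one : ∀ x : ℝ, |x| ≤ 5 / 4 → η x = 1

/-- The symbol of the `n`-th Littlewood–Paley block; index `0` plays the role of `Δ_{-1}`
and index `n+1` the role of `Δ_n`, with symbol `φ(2^{-n}ξ)`, `φ(ξ) = η(ξ) - η(ξ/2)`. -/
def lpSymb (c : LPCutoff) : ℕ → ℝ → ℝ
  | 0 => c.η
  | n + 1 => fun ξ => c.η (ξ / 2 ^ n) - c.η (ξ / 2 ^ (n + 1))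

/-- The `n`-th Littlewood–Paley block `Δ_{n-1} f` of a function on the torus. -/
def lpBlock {d : ℕ} (c : LPCutoff) (n : ℕ) (f : Vec d → ℝ) : Vec d → ℂ :=
  fun x => ∑' ξ : Fin d → ℤ,
    (lpSymb c n (Real.sqrt (∑ j, ((ξ j : ℝ)) ^ 2)) : ℂ) * fourierCoeffT f ξ *
      Complex.exp ((2 * (π : ℂ) * Complex.I) * ∑ j, (ξ j : ℂ) * (x j : ℂ))

/-- The `ℓ^r` norm (`r ∈ (0,∞]`) of a sequence of extended nonnegative reals. -/
def ellNorm (r : ℝ≥0∞) (a : ℕ → ℝ≥0∞) : ℝ≥0∞ :=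
  if r = ⊤ then ⨆ n, a n else (∑' n, a n ^ r.toReal) ^ (1 / r.toReal)

/-- The Besov norm `‖f‖_{B^s_{p,r}(𝕋^d)} = ‖(2^{js} ‖Δ_j f‖_{L^p})_j‖_{ℓ^r}`. -/
def besovNorm {d : ℕ} (c : LPCutoff) (s : ℝ) (p r : ℝ≥0∞) (f : Vec d → ℝ) : ℝ≥0∞ :=
  ellNorm r fun n =>
    ENNReal.ofReal ((2 : ℝ) ^ (((n : ℝ) - 1) * s)) *
      eLpNorm (lpBlock c n f) p (volume.restrict (unitCube d))

/-- The Besov norm of a vector field. -/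
def besovNormVec {d : ℕ} (c : LPCutoff) (s : ℝ) (p r : ℝ≥0∞)
    (u : Vec d → Fin d → ℝ) : ℝ≥0∞ :=
  ∑ i, besovNorm c s p r fun x => u x i

/-- `u` is a solution of the periodic Euler–Poincaré equations with data `u₀`,
belonging continuously to `H^∞ = ∩_s H^s`. -/
def IsEPSolInf {d : ℕ} (Ieq Icont : Set ℝ) (u₀ : Vec d → Fin d → ℝ)
    (u : ℝ → Vec d → Fin d → ℝ) : Prop :=
  u 0 = u₀ ∧ (∀ t ∈ Ieq, EPEq u t) ∧ (∀ t ∈ Icont, IsPeriodicVec (u t)) ∧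
    ∀ s : ℝ, ContHs s Icont u

/-- The periodic peakon profile: the `1`-periodic function equal to
`cosh(1/2 - z)/sinh(1/2)` on `[0,1]`. -/
def Phi (z : ℝ) : ℝ := Real.cosh (1 / 2 - Int.fract z) / Real.sinh (1 / 2)

end

/-- Lemma 5.3, logarithmic Gronwall inequality. If `A ∈ C¹([0,T])`
is positive and `A'(t) ≤ B A(t) ln(2 + A(t))` on `[0,T]`, then
`A(t) ≤ (2 + A(0))^{e^{Bt}}` on `[0,T]`. -/
theorem statement9 (T : ℝ) (hT : 0 < T) (A : ℝ → ℝ) (B : ℝ)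
    (hA : ContDiffOn ℝ 1 A (Set.Icc 0 T))
    (hpos : ∀ t ∈ Set.Icc (0 : ℝ) T, 0 < A t)
    (hineq : ∀ t ∈ Set.Icc (0 : ℝ) T,
      derivWithin A (Set.Icc 0 T) t ≤ B * A t * Real.log (2 + A t)) :
    ∀ t ∈ Set.Icc (0 : ℝ) T, A t ≤ (2 + A 0) ^ Real.exp (B * t) := by
  have hA0 : 0 < A 0 := hpos 0 ⟨le_refl 0, hT.le⟩
  set L : ℝ := Real.log (2 + A 0) with hLdef
  have h2A0 : (1 : ℝ) < 2 + A 0 := by linarith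
  have hL : 0 < L := Real.log_pos h2A0
  have hc : ContinuousOn A (Set.Icc 0 T) := hA.continuousOn
  have hder : ∀ x ∈ Set.Ico (0 : ℝ) T,
      HasDerivWithinAt A (derivWithin A (Set.Icc 0 T) x) (Set.Ici x) x := by
    intro x hx
    exact ((hA.differentiableOn one_ne_zero x (Set.Ico_subset_Icc_self hx)).hasDerivWithinAt).mono_of_mem_nhdsWithin
      (Icc_mem_nhdsGE_of_mem hx)
  have hposx : ∀ x ∈ Set.Icc (0 : ℝ) T, (0:ℝ) < 2 + A x := fun x hx => by
    have := hpos x hx; linarith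
  have hlogx : ∀ x ∈ Set.Icc (0 : ℝ) T, (0:ℝ) < Real.log (2 + A x) := fun x hx => by
    have := hpos x hx; exact Real.log_pos (by linarith)
  rcases lt_trichotomy B 0 with hBneg | hBzero | hBpos
  · -- B < 0 : barrier φ t = exp (exp (B t) * L)
    set φ : ℝ → ℝ := fun t => Real.exp (Real.exp (B * t) * L) with hφdef
    set φ' : ℝ → ℝ := fun t => B * Real.exp (B * t) * L * φ t with hφ'def
    have hφpos : ∀ t, 0 < φ t := fun t => Real.exp_pos _
    have hφderiv : ∀ x : ℝ, HasDerivAt φ (φ' x) x := by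
      intro x
      have h1 : HasDerivAt (fun t : ℝ => B * t) B x := by
        simpa using (hasDerivAt_id x).const_mul B
      have h2 : HasDerivAt (fun t : ℝ => Real.exp (B * t)) (Real.exp (B * x) * B) x := h1.exp
      have h3 : HasDerivAt (fun t : ℝ => Real.exp (B * t) * L) (Real.exp (B * x) * B * L) x :=
        h2.mul_const L
      have h4 := h3.exp
      convert h4 using 1
      simp only [hφ'def, hφdef]
      ring
    have hlogφ : ∀ t, Real.log (φ t) = Real.exp (B * t) * L := fun t => Real.log_exp _
    have key : ∀ ⦃x⦄, x ∈ Set.Icc (0:ℝ) T → A x ≤ φ x := by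
      refine image_le_of_deriv_right_lt_deriv_boundary hc hder ?_ hφderiv ?_
      · have : φ 0 = 2 + A 0 := by
          simp only [hφdef, mul_zero, Real.exp_zero, one_mul]
          exact Real.exp_log (by linarith)
        rw [this]; linarith
      · intro x hx hcontact
        have hxIcc := Set.Ico_subset_Icc_self hx
        have h1 := hineq x hxIcc
        have hAx := hpos x hxIcc
        have hlt : Real.log (φ x) < Real.log (2 + φ x) :=
          Real.log_lt_log (hφpos x) (by linarith [hφpos x])
        have h2 : B * A x * Real.log (2 + A x) < φ' x := by
          rw [hcontact]
          have : φ' x = B * φ x * Real.log (φ x) := by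
            simp only [hφ'def, hlogφ]; ring
          rw [this]
          have hBφ : B * φ x < 0 := mul_neg_of_neg_of_pos hBneg (hφpos x)
          calc B * φ x * Real.log (2 + φ x) < B * φ x * Real.log (φ x) := by
                exact mul_lt_mul_of_neg_left hlt hBφ
            _ = B * φ x * Real.log (φ x) := rfl
        linarith
    intro t ht
    have := key ht
    rw [Real.rpow_def_of_pos (by linarith)]
    calc A t ≤ φ t := this
      _ = Real.exp (Real.log (2 + A 0) * Real.exp (B * t)) := by
          simp only [hφdef]; ring_nf; rw [hLdef]
  · -- B = 0
    subst hBzero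
    have key : ∀ ⦃x⦄, x ∈ Set.Icc (0:ℝ) T → A x ≤ 2 + A 0 := by
      refine image_le_of_deriv_right_le_deriv_boundary (f' := fun x => derivWithin A (Set.Icc 0 T) x)
        (B := fun _ => 2 + A 0) (B' := fun _ => 0) hc hder (by show A 0 ≤ 2 + A 0; linarith) continuousOn_const
        (fun x _ => (hasDerivAt_const x _).hasDerivWithinAt) ?_
      intro x hx
      have := hineq x (Set.Ico_subset_Icc_self hx)
      simpa using this
    intro t ht
    have : Real.exp (0 * t) = 1 := by simp
    rw [this, Real.rpow_one]
    exact key ht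
  · -- B > 0 : work with f t = log (2 + A t), barrier w t = exp (B t) * L
    set f : ℝ → ℝ := fun t => Real.log (2 + A t) with hfdef
    set w : ℝ → ℝ := fun t => Real.exp (B * t) * L with hwdef
    have hfc : ContinuousOn f (Set.Icc 0 T) := by
      apply (continuousOn_const.add hc).log
      intro x hx; exact ne_of_gt (hposx x hx)
    have hfder : ∀ x ∈ Set.Ico (0 : ℝ) T,
        HasDerivWithinAt f (derivWithin A (Set.Icc 0 T) x / (2 + A x)) (Set.Ici x) x := by
      intro x hx
      exact ((hder x hx).const_add 2).log (ne_of_gt (hposx x (Set.Ico_subset_Icc_self hx)))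
    have hwderiv : ∀ x : ℝ, HasDerivAt w (B * Real.exp (B * x) * L) x := by
      intro x
      have h1 : HasDerivAt (fun t : ℝ => B * t) B x := by
        simpa using (hasDerivAt_id x).const_mul B
      have h2 : HasDerivAt (fun t : ℝ => Real.exp (B * t) * L) (Real.exp (B * x) * B * L) x :=
        (h1.exp).mul_const L
      convert h2 using 1; ring
    have key : ∀ ⦃x⦄, x ∈ Set.Icc (0:ℝ) T → f x ≤ w x := by
      refine image_le_of_deriv_right_lt_deriv_boundary hfc hfder ?_ hwderiv ?_
      · simp only [hfdef, hwdef, mul_zero, Real.exp_zero, one_mul, hLdef, le_refl]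
      · intro x hx hcontact
        have hxIcc := Set.Ico_subset_Icc_self hx
        have h1 := hineq x hxIcc
        have hAx := hpos x hxIcc
        have h2Ax := hposx x hxIcc
        have hlog := hlogx x hxIcc
        have hcon : Real.exp (B * x) * L = Real.log (2 + A x) := hcontact.symm
        rw [mul_assoc, hcon]
        have step1 : derivWithin A (Set.Icc 0 T) x / (2 + A x)
            ≤ B * A x * Real.log (2 + A x) / (2 + A x) :=
          div_le_div_of_nonneg_right h1 h2Ax.le |>.trans_eq rfl
        have step2 : B * A x * Real.log (2 + A x) / (2 + A x) < B * Real.log (2 + A x) := by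
          rw [div_lt_iff₀ h2Ax]
          nlinarith [mul_pos hBpos hlog]
        linarith
    intro t ht
    have hkey := key ht
    have : A t ≤ Real.exp (Real.exp (B * t) * L) := by
      have h1 : 2 + A t = Real.exp (f t) := (Real.exp_log (hposx t ht)).symm
      have h2 : Real.exp (f t) ≤ Real.exp (w t) := Real.exp_le_exp.mpr hkey
      have := hpos t ht
      simp only [hwdef] at h2
      linarith [h1 ▸ h2]
    rw [Real.rpow_def_of_pos (by linarith)]
    calc A t ≤ Real.exp (Real.exp (B * t) * L) := this
      _ = Real.exp (Real.log (2 + A 0) * Real.exp (B * t)) := by rw [mul_comm]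
end

section
/- Let a > 0, let T* ∈ (0, ∞], and let g : [0, T*) → ℝ be differentiable with g'(t) ≤ −(1/2)(g(t) + a)(g(t) − a) for all t ∈ [0, T*) and g(0) < −a. Then g(t) < −a for all t ∈ [0, T*), the inequality ((g(0)+a)/(g(0)−a))·e^{a t} − 1 ≤ 2a/(g(t) − a) ≤ 0 holds for all t ∈ [0, T*), and consequently T* ≤ (1/a)·ln((g(0) − a)/(g(0) + a)); if T* equals this bound then g(t) → −∞ as t → T*. -/
open MeasureTheory Real Filter
open scoped ENNReal NNReal

set_option maxHeartbeats 1000000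
/-- Riccati-type differential inequality. If `g' ≤ -(1/2)(g+a)(g-a)`
on `[0,T*)` and `g(0) < -a < 0`, then `g < -a` on `[0,T*)`, the explicit bound
`((g(0)+a)/(g(0)-a)) e^{at} - 1 ≤ 2a/(g(t)-a) ≤ 0` holds, `T* ≤ (1/a) ln((g(0)-a)/(g(0)+a))`,
and if `T*` equals this bound then `g(t) → -∞` as `t → T*`. -/
theorem statement11 (a : ℝ) (ha : 0 < a) (Tstar : ℝ≥0∞) (hT : 0 < Tstar)
    (g : ℝ → ℝ)
    (hdiff : ∀ t ∈ ivl Tstar, DifferentiableWithinAt ℝ g (ivl Tstar) t)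
    (hineq : ∀ t ∈ ivl Tstar,
      derivWithin g (ivl Tstar) t ≤ -(1 / 2) * (g t + a) * (g t - a))
    (h0 : g 0 < -a) :
    (∀ t ∈ ivl Tstar, g t < -a) ∧
    (∀ t ∈ ivl Tstar,
      (g 0 + a) / (g 0 - a) * Real.exp (a * t) - 1 ≤ 2 * a / (g t - a) ∧
        2 * a / (g t - a) ≤ 0) ∧
    Tstar ≤ ENNReal.ofReal (1 / a * Real.log ((g 0 - a) / (g 0 + a))) ∧
    (Tstar = ENNReal.ofReal (1 / a * Real.log ((g 0 - a) / (g 0 + a))) →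
      Filter.Tendsto g (nhdsWithin Tstar.toReal (ivl Tstar)) Filter.atBot) := by
  have hmem : ∀ {t : ℝ}, t ∈ ivl Tstar ↔ 0 ≤ t ∧ ENNReal.ofReal t < Tstar := fun {t} => Iff.rfl
  have hord : ∀ {s t : ℝ}, t ∈ ivl Tstar → 0 ≤ s → s ≤ t → s ∈ ivl Tstar := by
    intro s t ht hs hst
    exact hmem.mpr ⟨hs, lt_of_le_of_lt (ENNReal.ofReal_le_ofReal hst) (hmem.mp ht).2⟩
  have hcont : ContinuousOn g (ivl Tstar) := fun t ht => (hdiff t ht).continuousWithinAt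
  have hg0a : g 0 + a < 0 := by linarith
  have hg0a' : g 0 - a < 0 := by linarith
  -- monotonicity of the auxiliary function
  have hmono : ∀ t₀ ∈ ivl Tstar, (∀ s ∈ Set.Icc (0:ℝ) t₀, g s < a) →
      (g 0 + a) / (g 0 - a) ≤ Real.exp (-(a * t₀)) * ((g t₀ + a) / (g t₀ - a)) := by
    intro t₀ ht₀ hga
    have ht₀0 : (0:ℝ) ≤ t₀ := (hmem.mp ht₀).1
    have hsub : Set.Icc (0:ℝ) t₀ ⊆ ivl Tstar := fun s hs => hord ht₀ hs.1 hs.2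
    have hnbhd : ∀ x ∈ Set.Ioo (0:ℝ) t₀, ivl Tstar ∈ nhds x := by
      intro x hx
      exact Filter.mem_of_superset (Ioo_mem_nhds hx.1 hx.2)
        (fun s hs => hsub ⟨hs.1.le, hs.2.le⟩)
    have hkey : ∀ x ∈ Set.Ioo (0:ℝ) t₀,
        HasDerivAt (fun t => Real.exp (-(a * t)) * ((g t + a) / (g t - a)))
          (Real.exp (-(a * x)) * (-a) * ((g x + a) / (g x - a))
            + Real.exp (-(a * x)) *
              ((deriv g x * (g x - a) - (g x + a) * deriv g x) / (g x - a) ^ 2)) x ∧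
        0 ≤ Real.exp (-(a * x)) * (-a) * ((g x + a) / (g x - a))
            + Real.exp (-(a * x)) *
              ((deriv g x * (g x - a) - (g x + a) * deriv g x) / (g x - a) ^ 2) := by
      intro x hx
      have hxI : x ∈ ivl Tstar := hsub ⟨hx.1.le, hx.2.le⟩
      have hne : g x - a ≠ 0 := sub_ne_zero.mpr (hga x ⟨hx.1.le, hx.2.le⟩).ne
      have hdx : DifferentiableAt ℝ g x := (hdiff x hxI).differentiableAt (hnbhd x hx)
      have hgd : HasDerivAt g (deriv g x) x := hdx.hasDerivAt
      have hq : HasDerivAt (fun t => (g t + a) / (g t - a))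
          ((deriv g x * (g x - a) - (g x + a) * deriv g x) / (g x - a) ^ 2) x :=
        (hgd.add_const a).div (hgd.sub_const a) hne
      have hexp : HasDerivAt (fun t => Real.exp (-(a * t))) (Real.exp (-(a * x)) * (-a)) x := by
        have h1 : HasDerivAt (fun t : ℝ => -(a * t)) (-a) x := by
          simpa [Pi.neg_def] using ((hasDerivAt_id x).const_mul a).neg
        exact h1.exp
      refine ⟨hexp.mul hq, ?_⟩
      have hDW : derivWithin g (ivl Tstar) x = deriv g x := derivWithin_of_mem_nhds (hnbhd x hx)
      have hle : deriv g x ≤ -(1 / 2) * (g x + a) * (g x - a) := by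
        rw [← hDW]; exact hineq x hxI
      have hsq : (0:ℝ) < (g x - a) ^ 2 := by positivity
      have hbr : 0 ≤ -a * ((g x + a) * (g x - a)) - 2 * a * deriv g x := by
        nlinarith [mul_le_mul_of_nonneg_left hle (by linarith : (0:ℝ) ≤ 2 * a)]
      have hrw : Real.exp (-(a * x)) * (-a) * ((g x + a) / (g x - a))
            + Real.exp (-(a * x)) *
              ((deriv g x * (g x - a) - (g x + a) * deriv g x) / (g x - a) ^ 2)
          = Real.exp (-(a * x)) *
              ((-a * ((g x + a) * (g x - a)) - 2 * a * deriv g x) / (g x - a) ^ 2) := by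
        field_simp
        ring
      rw [hrw]
      exact mul_nonneg (Real.exp_pos _).le (div_nonneg hbr hsq.le)
    have hm : MonotoneOn (fun t => Real.exp (-(a * t)) * ((g t + a) / (g t - a)))
        (Set.Icc 0 t₀) := by
      apply monotoneOn_of_deriv_nonneg (convex_Icc 0 t₀)
      · apply ContinuousOn.mul
        · exact (Real.continuous_exp.comp (continuous_const.mul continuous_id).neg).continuousOn
        · exact ((hcont.mono hsub).add continuousOn_const).div
            ((hcont.mono hsub).sub continuousOn_const)
            (fun s hs => sub_ne_zero.mpr (hga s hs).ne)
      · rw [interior_Icc]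
        exact fun x hx => ((hkey x hx).1.differentiableAt).differentiableWithinAt
      · rw [interior_Icc]
        intro x hx
        rw [(hkey x hx).1.deriv]
        exact (hkey x hx).2
    have := hm (Set.left_mem_Icc.mpr ht₀0) (Set.right_mem_Icc.mpr ht₀0) ht₀0
    simpa using this
  -- claim 1 : g < -a on [0, T*)
  have claim1 : ∀ t ∈ ivl Tstar, g t < -a := by
    intro t htI
    by_contra hcon
    push_neg at hcon
    have hIccsub : Set.Icc (0:ℝ) t ⊆ ivl Tstar := fun s hs => hord htI hs.1 hs.2
    have ht0 : (0:ℝ) ≤ t := (hmem.mp htI).1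
    have hKcl : IsClosed {s ∈ Set.Icc (0:ℝ) t | -a ≤ g s} := by
      have hKeq : {s ∈ Set.Icc (0:ℝ) t | -a ≤ g s}
          = Set.Icc (0:ℝ) t ∩ g ⁻¹' Set.Ici (-a) := by
        ext s; simp [Set.mem_sep_iff, Set.mem_preimage, Set.mem_Ici, and_comm]
      rw [hKeq]
      exact (hcont.mono hIccsub).preimage_isClosed_of_isClosed isClosed_Icc isClosed_Ici
    have hKne : {s ∈ Set.Icc (0:ℝ) t | -a ≤ g s}.Nonempty := ⟨t, ⟨ht0, le_refl t⟩, hcon⟩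
    have hKbdd : BddBelow {s ∈ Set.Icc (0:ℝ) t | -a ≤ g s} := ⟨0, fun s hs => hs.1.1⟩
    set t₀ := sInf {s ∈ Set.Icc (0:ℝ) t | -a ≤ g s} with ht₀def
    have ht₀K : t₀ ∈ {s ∈ Set.Icc (0:ℝ) t | -a ≤ g s} := hKcl.csInf_mem hKne hKbdd
    have ht₀pos : 0 < t₀ := by
      rcases ht₀K.1.1.lt_or_eq with h | h
      · exact h
      · exfalso; have h2 := ht₀K.2; rw [← h] at h2; linarith
    have hlt : ∀ s ∈ Set.Ico (0:ℝ) t₀, g s < -a := by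
      intro s hs
      by_contra h'
      push_neg at h'
      have hsK : s ∈ {s ∈ Set.Icc (0:ℝ) t | -a ≤ g s} :=
        ⟨⟨hs.1, le_trans hs.2.le ht₀K.1.2⟩, h'⟩
      exact absurd (csInf_le hKbdd hsK) (not_le.mpr hs.2)
    have hnb : (nhdsWithin t₀ (Set.Ico (0:ℝ) t₀)).NeBot := by
      refine mem_closure_iff_nhdsWithin_neBot.mp ?_
      rw [closure_Ico (ne_of_lt ht₀pos)]
      exact ⟨ht₀pos.le, le_refl t₀⟩
    have hct : Filter.Tendsto g (nhdsWithin t₀ (Set.Ico (0:ℝ) t₀)) (nhds (g t₀)) :=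
      (hcont t₀ (hIccsub ht₀K.1)).mono
        (fun s hs => hIccsub ⟨hs.1, le_trans hs.2.le ht₀K.1.2⟩)
    have hge : g t₀ ≤ -a :=
      le_of_tendsto hct (Filter.eventually_of_mem self_mem_nhdsWithin
        (fun s hs => (hlt s hs).le))
    have heq : g t₀ = -a := le_antisymm hge ht₀K.2
    have hga : ∀ s ∈ Set.Icc (0:ℝ) t₀, g s < a := by
      intro s hs
      rcases hs.2.lt_or_eq with h | h
      · have := hlt s ⟨hs.1, h⟩; linarith
      · rw [h, heq]; linarith
    have hmm := hmono t₀ (hIccsub ht₀K.1) hga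
    rw [heq] at hmm
    have hz : (-a + a) / (-a - a) = 0 := by
      rw [neg_add_cancel, zero_div]
    rw [hz, mul_zero] at hmm
    have hpos : 0 < (g 0 + a) / (g 0 - a) := div_pos_of_neg_of_neg hg0a hg0a'
    linarith
  -- claim 2 : explicit bound
  have claim2 : ∀ t ∈ ivl Tstar,
      (g 0 + a) / (g 0 - a) * Real.exp (a * t) - 1 ≤ 2 * a / (g t - a) ∧
        2 * a / (g t - a) ≤ 0 := by
    intro t ht
    have hgt : g t < -a := claim1 t ht
    have hne : g t - a < 0 := by linarith
    have hne' : g t - a ≠ 0 := hne.ne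
    have hm := hmono t ht (fun s hs => by
      have := claim1 s (hord ht hs.1 hs.2); linarith)
    have hm2 : (g 0 + a) / (g 0 - a) * Real.exp (a * t) ≤ (g t + a) / (g t - a) := by
      have h3 := mul_le_mul_of_nonneg_right hm (Real.exp_pos (a * t)).le
      have h4 : Real.exp (-(a * t)) * ((g t + a) / (g t - a)) * Real.exp (a * t)
          = (g t + a) / (g t - a) := by
        rw [mul_comm (Real.exp (-(a * t))), mul_assoc, ← Real.exp_add, neg_add_cancel,
          Real.exp_zero, mul_one]
      rwa [h4] at h3
    have hQ : (g t + a) / (g t - a) = 1 + 2 * a / (g t - a) := by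
      field_simp
      ring
    refine ⟨by rw [hQ] at hm2; linarith, ?_⟩
    exact div_nonpos_of_nonneg_of_nonpos (by linarith) hne.le
  -- strict bound on t
  have hr1 : (1:ℝ) < (g 0 - a) / (g 0 + a) := by
    rw [lt_div_iff_of_neg hg0a]
    linarith
  have hrpos : (0:ℝ) < (g 0 - a) / (g 0 + a) := by linarith
  have hBpos : 0 < 1 / a * Real.log ((g 0 - a) / (g 0 + a)) := by
    have := Real.log_pos hr1
    positivity
  have claim3 : ∀ t ∈ ivl Tstar, t < 1 / a * Real.log ((g 0 - a) / (g 0 + a)) := by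
    intro t ht
    have h1 := (claim2 t ht).1
    have hgt : g t < -a := claim1 t ht
    have hne : g t - a < 0 := by linarith
    have h2 : 2 * a / (g t - a) < 0 := div_neg_of_pos_of_neg (by linarith) hne
    have h3 : (g 0 + a) / (g 0 - a) * Real.exp (a * t) < 1 := by linarith
    have h6 : g 0 - a < Real.exp (a * t) * (g 0 + a) := by
      have h5 := mul_lt_mul_of_neg_right h3 hg0a'
      rw [one_mul] at h5
      calc g 0 - a < (g 0 + a) / (g 0 - a) * Real.exp (a * t) * (g 0 - a) := h5
        _ = Real.exp (a * t) * (g 0 + a) := by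
            rw [mul_right_comm, div_mul_cancel₀ _ hg0a'.ne, mul_comm]
    have h4 : Real.exp (a * t) < (g 0 - a) / (g 0 + a) :=
      (lt_div_iff_of_neg hg0a).mpr h6
    have h7 : a * t < Real.log ((g 0 - a) / (g 0 + a)) :=
      (Real.lt_log_iff_exp_lt hrpos).mpr h4
    calc t = 1 / a * (a * t) := by field_simp
      _ < 1 / a * Real.log ((g 0 - a) / (g 0 + a)) :=
        mul_lt_mul_of_pos_left h7 (by positivity)
  have claim4 : Tstar ≤ ENNReal.ofReal (1 / a * Real.log ((g 0 - a) / (g 0 + a))) := by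
    by_contra hc
    push_neg at hc
    have hBI : (1 / a * Real.log ((g 0 - a) / (g 0 + a))) ∈ ivl Tstar :=
      hmem.mpr ⟨hBpos.le, hc⟩
    exact lt_irrefl _ (claim3 _ hBI)
  refine ⟨claim1, claim2, claim4, ?_⟩
  -- blow-up
  intro hEq
  set B := 1 / a * Real.log ((g 0 - a) / (g 0 + a)) with hBdef
  have htR : Tstar.toReal = B := by rw [hEq, ENNReal.toReal_ofReal hBpos.le]
  rw [htR]
  have hexpB : Real.exp (a * B) = (g 0 - a) / (g 0 + a) := by
    rw [hBdef, show a * (1 / a * Real.log ((g 0 - a) / (g 0 + a)))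
        = Real.log ((g 0 - a) / (g 0 + a)) by field_simp]
    exact Real.exp_log hrpos
  have hLB : (g 0 + a) / (g 0 - a) * Real.exp (a * B) - 1 = 0 := by
    rw [hexpB]
    field_simp
    rw [mul_comm (g 0 + a) (g 0 - a), div_self (mul_ne_zero hg0a'.ne hg0a.ne), sub_self]
  have hLneg : ∀ t ∈ ivl Tstar, (g 0 + a) / (g 0 - a) * Real.exp (a * t) - 1 < 0 := by
    intro t ht
    have h1 := (claim2 t ht).1
    have hgt : g t < -a := claim1 t ht
    have h2 : 2 * a / (g t - a) < 0 := div_neg_of_pos_of_neg (by linarith) (by linarith)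
    linarith
  have hbd : ∀ t ∈ ivl Tstar,
      g t ≤ a + 2 * a / ((g 0 + a) / (g 0 - a) * Real.exp (a * t) - 1) := by
    intro t ht
    have hL := hLneg t ht
    have h1 := (claim2 t ht).1
    have hgt : g t < -a := claim1 t ht
    have hne : g t - a < 0 := by linarith
    have h2 : 2 * a ≤ ((g 0 + a) / (g 0 - a) * Real.exp (a * t) - 1) * (g t - a) :=
      (le_div_iff_of_neg hne).mp h1
    have h3 : g t - a ≤ 2 * a / ((g 0 + a) / (g 0 - a) * Real.exp (a * t) - 1) := by
      rw [le_div_iff_of_neg hL]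
      calc 2 * a ≤ ((g 0 + a) / (g 0 - a) * Real.exp (a * t) - 1) * (g t - a) := h2
        _ = (g t - a) * ((g 0 + a) / (g 0 - a) * Real.exp (a * t) - 1) := mul_comm _ _
    linarith
  have hcontL : Continuous (fun t : ℝ => (g 0 + a) / (g 0 - a) * Real.exp (a * t) - 1) :=
    (continuous_const.mul (Real.continuous_exp.comp (continuous_const.mul continuous_id))).sub
      continuous_const
  have htend0 : Filter.Tendsto (fun t => -((g 0 + a) / (g 0 - a) * Real.exp (a * t) - 1))
      (nhdsWithin B (ivl Tstar)) (nhdsWithin 0 (Set.Ioi 0)) := by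
    rw [tendsto_nhdsWithin_iff]
    constructor
    · have h : Filter.Tendsto (fun t => -((g 0 + a) / (g 0 - a) * Real.exp (a * t) - 1))
          (nhdsWithin B (ivl Tstar))
          (nhds (-((g 0 + a) / (g 0 - a) * Real.exp (a * B) - 1))) :=
        (hcontL.neg.tendsto B).mono_left nhdsWithin_le_nhds
      rw [hLB, neg_zero] at h
      exact h
    · exact Filter.eventually_of_mem self_mem_nhdsWithin
        (fun t ht => by simpa using (hLneg t ht))
  have htop : Filter.Tendsto
      (fun t => (-((g 0 + a) / (g 0 - a) * Real.exp (a * t) - 1))⁻¹)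
      (nhdsWithin B (ivl Tstar)) Filter.atTop := tendsto_inv_nhdsGT_zero.comp htend0
  have h1 : Filter.Tendsto
      (fun t => 2 * a * (-((g 0 + a) / (g 0 - a) * Real.exp (a * t) - 1))⁻¹)
      (nhdsWithin B (ivl Tstar)) Filter.atTop := htop.const_mul_atTop (by linarith)
  have h2 : Filter.Tendsto
      (fun t => a + -(2 * a * (-((g 0 + a) / (g 0 - a) * Real.exp (a * t) - 1))⁻¹))
      (nhdsWithin B (ivl Tstar)) Filter.atBot :=
    Filter.tendsto_atBot_add_const_left _ a (tendsto_neg_atTop_atBot.comp h1)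
  have hbot : Filter.Tendsto
      (fun t => a + 2 * a / ((g 0 + a) / (g 0 - a) * Real.exp (a * t) - 1))
      (nhdsWithin B (ivl Tstar)) Filter.atBot := by
    refine h2.congr (fun t => ?_)
    rw [inv_neg, div_eq_mul_inv]
    ring
  refine Filter.tendsto_atBot_mono' _ ?_ hbot
  exact Filter.eventually_of_mem self_mem_nhdsWithin (fun t ht => hbd t ht)
end

section
/- Let u : 𝕋^d → ℝ^d (or ℝ^d → ℝ^d) be a smooth vector field and set m = (1 − Δ)u. Then for each i = 1,…,d, the i-th component of (∇u)^T m can be written in divergence form: Σ_{j=1}^d m^j ∂_i u^j = Σ_{j=1}^d ∂_j( (1/2)δ_{ij}|u|² − ∂_i u · ∂_j u + (1/2)δ_{ij}|∇u|² ), where ∂_i u · ∂_j u = Σ_k ∂_i u^k ∂_j u^k and |∇u|² = Σ_{j,k}(∂_k u^j)². -/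
open MeasureTheory Real Filter
open scoped ENNReal NNReal

section Statement12Aux
variable {d : ℕ} {x : Vec d} {f g : Vec d → ℝ}

lemma pd_add (hf : DifferentiableAt ℝ f x) (hg : DifferentiableAt ℝ g x) (j : Fin d) :
    pd j (fun y => f y + g y) x = pd j f x + pd j g x := by
  simp [pd, fderiv_fun_add hf hg]

lemma pd_sub (hf : DifferentiableAt ℝ f x) (hg : DifferentiableAt ℝ g x) (j : Fin d) :
    pd j (fun y => f y - g y) x = pd j f x - pd j g x := by
  simp [pd, fderiv_fun_sub hf hg]

lemma pd_const_mul (hf : DifferentiableAt ℝ f x) (c : ℝ) (j : Fin d) :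
    pd j (fun y => c * f y) x = c * pd j f x := by
  simp [pd, fderiv_const_mul hf c]

lemma pd_mul (hf : DifferentiableAt ℝ f x) (hg : DifferentiableAt ℝ g x) (j : Fin d) :
    pd j (fun y => f y * g y) x = pd j f x * g x + f x * pd j g x := by
  simp only [pd, fderiv_fun_mul hf hg, ContinuousLinearMap.add_apply,
    ContinuousLinearMap.smul_apply, smul_eq_mul]
  ring

lemma pd_sq (hf : DifferentiableAt ℝ f x) (j : Fin d) :
    pd j (fun y => f y ^ 2) x = 2 * f x * pd j f x := by
  have h : (fun y => f y ^ 2) = fun y => f y * f y := by ext y; ring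
  rw [h, pd_mul hf hf]; ring

lemma pd_sum {ι : Type*} {s : Finset ι} {F : ι → Vec d → ℝ}
    (hF : ∀ l ∈ s, DifferentiableAt ℝ (F l) x) (j : Fin d) :
    pd j (fun y => ∑ l ∈ s, F l y) x = ∑ l ∈ s, pd j (F l) x := by
  simp [pd, fderiv_fun_sum hF]

lemma pd_combo {h : Vec d → ℝ} (hf : DifferentiableAt ℝ f x)
    (hg : DifferentiableAt ℝ g x) (hh : DifferentiableAt ℝ h x) (c : ℝ) (j : Fin d) :
    pd j (fun y => c * f y - g y + c * h y) x = c * pd j f x - pd j g x + c * pd j h x := by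
  rw [pd_add (f := fun y => c * f y - g y) (g := fun y => c * h y)
      ((hf.const_mul c).sub hg) (hh.const_mul c) j,
    pd_sub (f := fun y => c * f y) (hf.const_mul c) hg j,
    pd_const_mul hf c j, pd_const_mul hh c j]

lemma pd_smooth (hf : ∀ n : ℕ, ContDiff ℝ n f) (j : Fin d) (n : ℕ) :
    ContDiff ℝ n (pd j f) := by
  have h : ContDiff ℝ n (fderiv ℝ f) := (hf (n + 1)).fderiv_right (by norm_cast)
  exact h.clm_apply contDiff_const

lemma pd_comm (hf : ∀ n : ℕ, ContDiff ℝ n f) (a b : Fin d) (x : Vec d) :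
    pd a (pd b f) x = pd b (pd a f) x := by
  have hsymm : IsSymmSndFDerivAt ℝ f x :=
    ((hf 2).contDiffAt).isSymmSndFDerivAt (by norm_num)
  have hc : DifferentiableAt ℝ (fderiv ℝ f) x :=
    (((hf 2).fderiv_right (m := 1) (by norm_num)).differentiable (by norm_num)).differentiableAt
  have key : ∀ v w : Vec d,
      fderiv ℝ (fun y => fderiv ℝ f y w) x v = fderiv ℝ (fderiv ℝ f) x v w := by
    intro v w
    rw [fderiv_clm_apply hc (differentiableAt_const w)]
    simp
  show fderiv ℝ (fun y => fderiv ℝ f y (Pi.single b 1)) x (Pi.single a 1)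
      = fderiv ℝ (fun y => fderiv ℝ f y (Pi.single a 1)) x (Pi.single b 1)
  rw [key, key]
  exact hsymm.eq _ _

lemma alg12 (i : Fin d) (U : Fin d → ℝ) (D : Fin d → Fin d → ℝ)
    (DD : Fin d → Fin d → Fin d → ℝ) (hsym : ∀ a b l, DD a b l = DD b a l) :
    ∑ j, (U j - ∑ m, DD m m j) * D i j =
      ∑ j, (1 / 2 * (if i = j then (1 : ℝ) else 0) * (∑ l, 2 * U l * D j l)
        - (∑ l, (DD j i l * D j l + D i l * DD j j l))
        + 1 / 2 * (if i = j then (1 : ℝ) else 0) * (∑ l, ∑ m, 2 * D m l * DD j m l)) := by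
  have hR : ∀ j : Fin d,
      (1 / 2 * (if i = j then (1 : ℝ) else 0) * (∑ l, 2 * U l * D j l)
        - (∑ l, (DD j i l * D j l + D i l * DD j j l))
        + 1 / 2 * (if i = j then (1 : ℝ) else 0) * (∑ l, ∑ m, 2 * D m l * DD j m l))
      = (if i = j then ((∑ l, U l * D j l) + ∑ l, ∑ m, D m l * DD j m l) else 0)
        - ((∑ l, DD i j l * D j l) + ∑ l, D i l * DD j j l) := by
    intro j
    have e1 : (∑ l, 2 * U l * D j l) = 2 * ∑ l, U l * D j l := by
      rw [Finset.mul_sum]; exact Finset.sum_congr rfl fun l _ => by ring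
    have e2 : (∑ l, ∑ m, 2 * D m l * DD j m l) = 2 * ∑ l, ∑ m, D m l * DD j m l := by
      rw [Finset.mul_sum]
      exact Finset.sum_congr rfl fun l _ => by
        rw [Finset.mul_sum]; exact Finset.sum_congr rfl fun m _ => by ring
    have e3 : (∑ l, (DD j i l * D j l + D i l * DD j j l))
        = (∑ l, DD i j l * D j l) + ∑ l, D i l * DD j j l := by
      rw [Finset.sum_add_distrib]
      congr 1
      exact Finset.sum_congr rfl fun l _ => by rw [hsym j i]
    rw [e1, e2, e3]
    split <;> ring
  rw [Finset.sum_congr rfl fun j _ => hR j, Finset.sum_sub_distrib,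
    Finset.sum_ite_eq Finset.univ i _]
  simp only [Finset.mem_univ, if_true]
  have hA : (∑ l, ∑ m, D m l * DD i m l) = ∑ j, ∑ l, DD i j l * D j l := by
    rw [Finset.sum_comm]
    exact Finset.sum_congr rfl fun m _ => Finset.sum_congr rfl fun l _ => mul_comm _ _
  have hB : (∑ j : Fin d, ∑ l, D i l * DD j j l) = ∑ j, (∑ m, DD m m j) * D i j := by
    rw [Finset.sum_comm]
    exact Finset.sum_congr rfl fun l _ => by
      rw [Finset.sum_mul]
      exact Finset.sum_congr rfl fun m _ => mul_comm _ _
  rw [Finset.sum_add_distrib, hB, ← hA]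
  simp only [sub_mul, Finset.sum_sub_distrib]
  ring

end Statement12Aux
/-- divergence form of `(∇u)^T m`, Section 2. For a smooth vector
field `u` and `m = (1-Δ)u`,
`Σ_j m^j ∂_i u^j = Σ_j ∂_j((1/2)δ_{ij}|u|² - ∂_i u · ∂_j u + (1/2)δ_{ij}|∇u|²)`. -/
theorem statement12 (d : ℕ) (u : Vec d → Fin d → ℝ)
    (hu : ∀ (i : Fin d) (n : ℕ), ContDiff ℝ n fun x => u x i) :
    ∀ (i : Fin d) (x : Vec d),
      ∑ j, mom u x j * pd i (fun y => u y j) x =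
        ∑ j, pd j (fun y =>
            1 / 2 * (if i = j then (1 : ℝ) else 0) * (∑ l, u y l ^ 2)
              - (∑ l, pd i (fun z => u z l) y * pd j (fun z => u z l) y)
              + 1 / 2 * (if i = j then (1 : ℝ) else 0) *
                  (∑ l, ∑ m, (pd m (fun z => u z l) y) ^ 2)) x := by
  intro i x
  have hDu : ∀ l : Fin d, Differentiable ℝ fun y => u y l :=
    fun l => (hu l 1).differentiable (by norm_num)
  have hDpd : ∀ m l : Fin d, Differentiable ℝ (pd m fun y => u y l) :=
    fun m l => (pd_smooth (hu l) m 1).differentiable (by norm_num)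
  have hS : Differentiable ℝ fun y => ∑ l, u y l ^ 2 :=
    Differentiable.fun_sum fun l _ => (hDu l).pow 2
  have hB : ∀ j : Fin d,
      Differentiable ℝ fun y => ∑ l, pd i (fun z => u z l) y * pd j (fun z => u z l) y :=
    fun j => Differentiable.fun_sum fun l _ => (hDpd i l).mul (hDpd j l)
  have hG : Differentiable ℝ fun y => ∑ l, ∑ m, (pd m (fun z => u z l) y) ^ 2 :=
    Differentiable.fun_sum fun l _ => Differentiable.fun_sum fun m _ => (hDpd m l).pow 2
  have key : ∀ j ∈ Finset.univ, pd j (fun y =>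
      1 / 2 * (if i = j then (1 : ℝ) else 0) * (∑ l, u y l ^ 2)
        - (∑ l, pd i (fun z => u z l) y * pd j (fun z => u z l) y)
        + 1 / 2 * (if i = j then (1 : ℝ) else 0) *
            (∑ l, ∑ m, (pd m (fun z => u z l) y) ^ 2)) x
      = 1 / 2 * (if i = j then (1 : ℝ) else 0)
            * (∑ l, 2 * u x l * pd j (fun y => u y l) x)
        - (∑ l, (pd j (pd i (fun y => u y l)) x * pd j (fun y => u y l) x
            + pd i (fun y => u y l) x * pd j (pd j (fun y => u y l)) x))
        + 1 / 2 * (if i = j then (1 : ℝ) else 0) *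
            (∑ l, ∑ m, 2 * pd m (fun y => u y l) x * pd j (pd m (fun y => u y l)) x) := by
    intro j _
    have hcombo : pd j (fun y =>
        1 / 2 * (if i = j then (1 : ℝ) else 0) * (∑ l, u y l ^ 2)
          - (∑ l, pd i (fun z => u z l) y * pd j (fun z => u z l) y)
          + 1 / 2 * (if i = j then (1 : ℝ) else 0) *
              (∑ l, ∑ m, (pd m (fun z => u z l) y) ^ 2)) x
        = (1 / 2 * if i = j then (1 : ℝ) else 0)
              * pd j (fun y => ∑ l, u y l ^ 2) x
          - pd j (fun y => ∑ l, pd i (fun z => u z l) y * pd j (fun z => u z l) y) x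
          + (1 / 2 * if i = j then (1 : ℝ) else 0)
              * pd j (fun y => ∑ l, ∑ m, (pd m (fun z => u z l) y) ^ 2) x :=
      pd_combo (hS x) (hB j x) (hG x) _ j
    rw [hcombo]
    have hs1 : pd j (fun y => ∑ l, u y l ^ 2) x
        = ∑ l, pd j (fun y => u y l ^ 2) x :=
      pd_sum (fun l _ => (hDu l x).pow 2) j
    have hs2 : pd j (fun y => ∑ l, pd i (fun z => u z l) y * pd j (fun z => u z l) y) x
        = ∑ l, pd j (fun y => pd i (fun z => u z l) y * pd j (fun z => u z l) y) x :=
      pd_sum (fun l _ => (hDpd i l x).mul (hDpd j l x)) j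
    have hs3 : pd j (fun y => ∑ l, ∑ m, (pd m (fun z => u z l) y) ^ 2) x
        = ∑ l, pd j (fun y => ∑ m, (pd m (fun z => u z l) y) ^ 2) x :=
      pd_sum (fun l _ => (Differentiable.fun_sum fun m _ => (hDpd m l).pow 2) x) j
    have hs4 : ∀ l : Fin d, pd j (fun y => ∑ m, (pd m (fun z => u z l) y) ^ 2) x
        = ∑ m, pd j (fun y => (pd m (fun z => u z l) y) ^ 2) x :=
      fun l => pd_sum (fun m _ => (hDpd m l x).pow 2) j
    have h1 : ∀ l : Fin d, pd j (fun y => u y l ^ 2) x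
        = 2 * u x l * pd j (fun y => u y l) x :=
      fun l => pd_sq (hDu l x) j
    have h2 : ∀ l : Fin d,
        pd j (fun y => pd i (fun z => u z l) y * pd j (fun z => u z l) y) x
        = pd j (pd i (fun y => u y l)) x * pd j (fun y => u y l) x
            + pd i (fun y => u y l) x * pd j (pd j (fun y => u y l)) x :=
      fun l => pd_mul (hDpd i l x) (hDpd j l x) j
    have h3 : ∀ (l m : Fin d), pd j (fun y => (pd m (fun z => u z l) y) ^ 2) x
        = 2 * pd m (fun y => u y l) x * pd j (pd m (fun y => u y l)) x :=
      fun l m => pd_sq (hDpd m l x) j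
    rw [hs1, hs2, hs3]
    simp only [hs4, h1, h2, h3]
  rw [Finset.sum_congr rfl key]
  simp only [mom, lap]
  exact alg12 i (fun l => u x l) (fun m l => pd m (fun y => u y l) x)
    (fun a b l => pd a (pd b (fun y => u y l)) x) (fun a b l => pd_comm (hu l) a b x)
end

section
/- Let A = (a^{ij}) be a d×d orthogonal matrix, set ū = Au, m = (1 − Δ)u and ∂̄_i = Σ_j a^{ij} ∂_j. Let u : 𝕋^d → ℝ^d be a smooth vector field satisfying ∂̄_i u = 0 for all i = 2, 3, …, d. Then the first component of A·[(∇u)^T m], namely Σ_{j,k} a^{1j} m^k ∂_j u^k, equals (1/2) ∂̄₁( |ū|² − |∂̄₁ ū|² ). -/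
open MeasureTheory Real Filter
open scoped ENNReal NNReal

noncomputable section AuxS13
variable {d : ℕ}

private lemma pd_smooth13 {f : Vec d → ℝ} (hf : ∀ n : ℕ, ContDiff ℝ n f) (j : Fin d) :
    ∀ n : ℕ, ContDiff ℝ n (pd j f) := by
  intro n
  have h1 : ContDiff ℝ (n : ℕ∞) (fderiv ℝ f) := by
    apply (hf (n+1)).fderiv_right
    exact_mod_cast le_of_eq (by push_cast; ring)
  exact h1.clm_apply contDiff_const

private lemma pd_sum13 {ι : Type*} [Fintype ι] {f : ι → Vec d → ℝ} {x : Vec d}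
    (hf : ∀ i, DifferentiableAt ℝ (f i) x) (j : Fin d) :
    pd j (fun y => ∑ i, f i y) x = ∑ i, pd j (f i) x := by
  simp only [pd]
  rw [fderiv_fun_sum (fun i _ => hf i)]
  simp

private lemma pd_const_mul13 {c : ℝ} {f : Vec d → ℝ} {x : Vec d}
    (hf : DifferentiableAt ℝ f x) (j : Fin d) :
    pd j (fun y => c * f y) x = c * pd j f x := by
  simp only [pd]
  rw [fderiv_const_mul hf]
  simp

private lemma pd_sub13 {f g : Vec d → ℝ} {x : Vec d}
    (hf : DifferentiableAt ℝ f x) (hg : DifferentiableAt ℝ g x) (j : Fin d) :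
    pd j (fun y => f y - g y) x = pd j f x - pd j g x := by
  simp only [pd]
  rw [fderiv_fun_sub hf hg]
  simp

private lemma pd_sq13 {f : Vec d → ℝ} {x : Vec d}
    (hf : DifferentiableAt ℝ f x) (j : Fin d) :
    pd j (fun y => f y ^ 2) x = 2 * f x * pd j f x := by
  simp only [pd, sq]
  rw [fderiv_fun_mul hf hf]
  simp
  ring

end AuxS13

/-- identity (4.8). Let `A` be orthogonal, `ū = Au`,
`∂̄_i = Σ_j a^{ij}∂_j`, and suppose `∂̄_i u = 0` for all `i ≠ 1`. Then the first
component of `A·[(∇u)^T m]` equals `(1/2) ∂̄₁(|ū|² - |∂̄₁ū|²)`. -/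
theorem statement13 (d : ℕ) [NeZero d]
    (A : Matrix (Fin d) (Fin d) ℝ) (hA : A * A.transpose = 1)
    (u : Vec d → Fin d → ℝ)
    (hu : ∀ (i : Fin d) (n : ℕ), ContDiff ℝ n fun x => u x i)
    (hper : IsPeriodicVec u)
    (hflat : ∀ i : Fin d, i ≠ 0 → ∀ (l : Fin d) (x : Vec d),
      dirDeriv (A i) (fun y => u y l) x = 0) :
    ∀ x : Vec d,
      (∑ j, ∑ k, A 0 j * (mom u x k * pd j (fun y => u y k) x)) =
        1 / 2 * dirDeriv (A 0) (fun y =>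
            (∑ i, (∑ j, A i j * u y j) ^ 2) -
              ∑ i, (dirDeriv (A 0) (fun z => ∑ j, A i j * u z j) y) ^ 2) x := by
  intro x
  have hA' : A.transpose * A = 1 := mul_eq_one_comm.mp hA
  have horth : ∀ j k : Fin d, (∑ i, A i j * A i k) = if j = k then (1:ℝ) else 0 := by
    intro j k
    have h := congrFun (congrFun hA' j) k
    simpa [Matrix.mul_apply, Matrix.transpose_apply, Matrix.one_apply] using h
  -- orthogonality preserves sums of squares
  have orthsq : ∀ v : Fin d → ℝ, (∑ i, (∑ j, A i j * v j)^2) = ∑ j, (v j)^2 := by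
    intro v
    have h1 : ∀ i : Fin d, (∑ j, A i j * v j)^2
        = ∑ j, ∑ k, (v j * v k) * (A i j * A i k) := by
      intro i
      rw [sq, Finset.sum_mul_sum]
      exact Finset.sum_congr rfl fun j _ => Finset.sum_congr rfl fun k _ => by ring
    calc (∑ i, (∑ j, A i j * v j)^2)
        = ∑ i, ∑ j, ∑ k, (v j * v k) * (A i j * A i k) :=
          Finset.sum_congr rfl fun i _ => h1 i
      _ = ∑ j, ∑ i, ∑ k, (v j * v k) * (A i j * A i k) := Finset.sum_comm
      _ = ∑ j, ∑ k, ∑ i, (v j * v k) * (A i j * A i k) :=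
          Finset.sum_congr rfl fun j _ => Finset.sum_comm
      _ = ∑ j, ∑ k, (v j * v k) * ∑ i, A i j * A i k :=
          Finset.sum_congr rfl fun j _ => Finset.sum_congr rfl fun k _ =>
            (Finset.mul_sum _ _ _).symm
      _ = ∑ j, (v j)^2 := by
          simp [horth, mul_ite, Finset.sum_ite_eq', sq]
  have hdiff : ∀ (k : Fin d) (y : Vec d), DifferentiableAt ℝ (fun z => u z k) y :=
    fun k y => ((hu k 1).differentiable (by norm_num)).differentiableAt
  have hpddiff : ∀ (l k : Fin d) (y : Vec d),
      DifferentiableAt ℝ (pd l (fun z => u z k)) y :=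
    fun l k y => ((pd_smooth13 (hu k) l 1).differentiable (by norm_num)).differentiableAt
  set a : Vec d := A 0 with ha
  set g : Fin d → Vec d → ℝ := fun k => dirDeriv a (fun z => u z k) with hgdef
  have hgeq : ∀ k, g k = fun y => ∑ l, a l * pd l (fun z => u z k) y := fun k => rfl
  have hgdiff : ∀ (k : Fin d) (y : Vec d), DifferentiableAt ℝ (g k) y := by
    intro k y
    rw [hgeq k]
    exact DifferentiableAt.fun_sum fun l _ => (hpddiff l k y).const_mul (a l)
  -- linearity of dirDeriv
  have hlin : ∀ (i : Fin d) (y : Vec d),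
      dirDeriv a (fun z => ∑ j, A i j * u z j) y = ∑ j, A i j * g j y := by
    intro i y
    have hpdl : ∀ l : Fin d, pd l (fun z => ∑ j, A i j * u z j) y
        = ∑ j, A i j * pd l (fun z => u z j) y := by
      intro l
      rw [pd_sum13 (fun j => (hdiff j y).const_mul (A i j)) l]
      exact Finset.sum_congr rfl fun j _ => pd_const_mul13 (hdiff j y) l
    simp only [dirDeriv]
    calc (∑ l, a l * pd l (fun z => ∑ j, A i j * u z j) y)
        = ∑ l, ∑ j, a l * (A i j * pd l (fun z => u z j) y) :=
          Finset.sum_congr rfl fun l _ => by rw [hpdl l, Finset.mul_sum]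
      _ = ∑ j, ∑ l, a l * (A i j * pd l (fun z => u z j) y) := Finset.sum_comm
      _ = ∑ j, A i j * g j y := by
          refine Finset.sum_congr rfl fun j _ => ?_
          rw [hgeq j, Finset.mul_sum]
          exact Finset.sum_congr rfl fun l _ => by ring
  -- rewrite the function inside the outer dirDeriv
  have hFG : (fun y => (∑ i, (∑ j, A i j * u y j) ^ 2) -
        ∑ i, (dirDeriv a (fun z => ∑ j, A i j * u z j) y) ^ 2)
      = fun y => (∑ k, (u y k)^2) - ∑ k, (g k y)^2 := by
    funext y
    rw [orthsq (u y)]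
    congr 1
    calc (∑ i, (dirDeriv a (fun z => ∑ j, A i j * u z j) y) ^ 2)
        = ∑ i, (∑ j, A i j * g j y)^2 :=
          Finset.sum_congr rfl fun i _ => by rw [hlin i y]
      _ = ∑ j, (g j y)^2 := orthsq _
  -- second derivatives: ∑ l, w l * pd l (g' v k) x as a bilinear form
  have hBB : ∀ (v w : Vec d) (k : Fin d),
      (∑ l, w l * pd l (dirDeriv v (fun z => u z k)) x)
        = ∑ l, ∑ m, (w l * v m) * pd l (pd m (fun z => u z k)) x := by
    intro v w k
    refine Finset.sum_congr rfl fun l _ => ?_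
    have h1 : pd l (dirDeriv v (fun z => u z k)) x
        = ∑ m, v m * pd l (pd m (fun z => u z k)) x := by
      have : dirDeriv v (fun z => u z k)
          = fun y => ∑ m, v m * pd m (fun z => u z k) y := rfl
      rw [this, pd_sum13 (fun m => (hpddiff m k x).const_mul (v m)) l]
      exact Finset.sum_congr rfl fun m _ => pd_const_mul13 (hpddiff m k x) l
    rw [h1, Finset.mul_sum]
    exact Finset.sum_congr rfl fun m _ => by ring
  -- the key fact: ∑ l a l pd l (g k) x = lap u_k x
  have hlap : ∀ k : Fin d, (∑ l, a l * pd l (g k) x) = lap (fun z => u z k) x := by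
    intro k
    set h : Fin d → Fin d → ℝ := fun l m => pd l (pd m (fun z => u z k)) x with hh
    have hS : ∀ i : Fin d, (∑ l, ∑ m, (A i l * A i m) * h l m)
        = ∑ l, A i l * pd l (dirDeriv (A i) (fun z => u z k)) x := by
      intro i
      rw [hBB (A i) (A i) k]
    have hzero : ∀ i : Fin d, i ≠ 0 → (∑ l, ∑ m, (A i l * A i m) * h l m) = 0 := by
      intro i hi
      rw [hS i]
      have hz : dirDeriv (A i) (fun z => u z k) = fun _ => (0:ℝ) := by
        funext y; exact hflat i hi k y
      rw [hz]
      have : ∀ l : Fin d, pd l (fun _ : Vec d => (0:ℝ)) x = 0 := by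
        intro l; simp [pd]
      simp [this]
    have htot : (∑ i, ∑ l, ∑ m, (A i l * A i m) * h l m) = lap (fun z => u z k) x := by
      calc (∑ i, ∑ l, ∑ m, (A i l * A i m) * h l m)
          = ∑ l, ∑ i, ∑ m, (A i l * A i m) * h l m := Finset.sum_comm
        _ = ∑ l, ∑ m, ∑ i, (A i l * A i m) * h l m :=
            Finset.sum_congr rfl fun l _ => Finset.sum_comm
        _ = ∑ l, ∑ m, h l m * ∑ i, A i l * A i m := by
            refine Finset.sum_congr rfl fun l _ => Finset.sum_congr rfl fun m _ => ?_
            rw [Finset.mul_sum]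
            exact Finset.sum_congr rfl fun i _ => by ring
        _ = ∑ l, h l l := by simp [horth, mul_ite, Finset.sum_ite_eq']
        _ = lap (fun z => u z k) x := rfl
    have hsingle : (∑ i, ∑ l, ∑ m, (A i l * A i m) * h l m)
        = ∑ l, ∑ m, (a l * a m) * h l m := by
      rw [Fintype.sum_eq_single (0 : Fin d) hzero]
    have hgk : (∑ l, a l * pd l (g k) x) = ∑ l, ∑ m, (a l * a m) * h l m := hBB a a k
    rw [hgk, ← hsingle, htot]
  -- compute the RHS
  have hsumsq_diff : ∀ y : Vec d, DifferentiableAt ℝ (fun z => ∑ k, (u z k)^2) y :=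
    fun y => DifferentiableAt.fun_sum fun k _ => (hdiff k y).pow 2
  have hsumsqg_diff : ∀ y : Vec d, DifferentiableAt ℝ (fun z => ∑ k, (g k z)^2) y :=
    fun y => DifferentiableAt.fun_sum fun k _ => (hgdiff k y).pow 2
  have hpdF : ∀ l : Fin d, pd l (fun y => (∑ k, (u y k)^2) - ∑ k, (g k y)^2) x
      = (∑ k, 2 * u x k * pd l (fun z => u z k) x)
        - ∑ k, 2 * g k x * pd l (g k) x := by
    intro l
    rw [pd_sub13 (hsumsq_diff x) (hsumsqg_diff x) l,
      pd_sum13 (f := fun k z => u z k ^ 2) (fun k => (hdiff k x).pow 2) l,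
      pd_sum13 (f := fun k z => g k z ^ 2) (fun k => (hgdiff k x).pow 2) l]
    congr 1
    · exact Finset.sum_congr rfl fun k _ => pd_sq13 (hdiff k x) l
    · exact Finset.sum_congr rfl fun k _ => pd_sq13 (hgdiff k x) l
  have hRHS : (1 / 2 : ℝ) * dirDeriv a (fun y =>
        (∑ i, (∑ j, A i j * u y j) ^ 2) -
          ∑ i, (dirDeriv a (fun z => ∑ j, A i j * u z j) y) ^ 2) x
      = (∑ k, u x k * g k x) - ∑ k, g k x * lap (fun z => u z k) x := by
    rw [hFG]
    have h1 : dirDeriv a (fun y => (∑ k, (u y k)^2) - ∑ k, (g k y)^2) x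
        = ∑ l, a l * ((∑ k, 2 * u x k * pd l (fun z => u z k) x)
            - ∑ k, 2 * g k x * pd l (g k) x) := by
      simp only [dirDeriv]
      exact Finset.sum_congr rfl fun l _ => by rw [hpdF l]
    rw [h1]
    have h2 : ∀ l : Fin d, a l * ((∑ k, 2 * u x k * pd l (fun z => u z k) x)
          - ∑ k, 2 * g k x * pd l (g k) x)
        = ∑ k, (2 * u x k * (a l * pd l (fun z => u z k) x)
            - 2 * g k x * (a l * pd l (g k) x)) := by
      intro l
      rw [Finset.sum_sub_distrib, mul_sub, Finset.mul_sum, Finset.mul_sum]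
      congr 1 <;> exact Finset.sum_congr rfl fun k _ => by ring
    have h3 : ∀ k : Fin d, (∑ l, a l * pd l (fun z => u z k) x) = g k x := fun k => rfl
    have h4 : (∑ l, a l * ((∑ k, 2 * u x k * pd l (fun z => u z k) x)
          - ∑ k, 2 * g k x * pd l (g k) x))
        = ∑ k, (2 * u x k * g k x - 2 * g k x * lap (fun z => u z k) x) := by
      calc (∑ l, a l * ((∑ k, 2 * u x k * pd l (fun z => u z k) x)
            - ∑ k, 2 * g k x * pd l (g k) x))
          = ∑ l, ∑ k, (2 * u x k * (a l * pd l (fun z => u z k) x)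
              - 2 * g k x * (a l * pd l (g k) x)) :=
            Finset.sum_congr rfl fun l _ => h2 l
        _ = ∑ k, ∑ l, (2 * u x k * (a l * pd l (fun z => u z k) x)
              - 2 * g k x * (a l * pd l (g k) x)) := Finset.sum_comm
        _ = ∑ k, (2 * u x k * (∑ l, a l * pd l (fun z => u z k) x)
              - 2 * g k x * (∑ l, a l * pd l (g k) x)) := by
            refine Finset.sum_congr rfl fun k _ => ?_
            rw [Finset.sum_sub_distrib, Finset.mul_sum, Finset.mul_sum]
        _ = ∑ k, (2 * u x k * g k x - 2 * g k x * lap (fun z => u z k) x) := by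
            refine Finset.sum_congr rfl fun k _ => ?_
            rw [h3 k, hlap k]
    rw [h4, Finset.mul_sum, ← Finset.sum_sub_distrib]
    exact Finset.sum_congr rfl fun k _ => by ring
  -- compute the LHS
  have hLHS : (∑ j, ∑ k, A 0 j * (mom u x k * pd j (fun y => u y k) x))
      = (∑ k, u x k * g k x) - ∑ k, g k x * lap (fun z => u z k) x := by
    calc (∑ j, ∑ k, A 0 j * (mom u x k * pd j (fun y => u y k) x))
        = ∑ k, ∑ j, A 0 j * (mom u x k * pd j (fun y => u y k) x) := Finset.sum_comm
      _ = ∑ k, mom u x k * g k x := by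
          refine Finset.sum_congr rfl fun k _ => ?_
          rw [hgeq k, Finset.mul_sum]
          exact Finset.sum_congr rfl fun j _ => by rw [← ha]; ring
      _ = ∑ k, (u x k * g k x - g k x * lap (fun z => u z k) x) := by
          refine Finset.sum_congr rfl fun k _ => ?_
          simp only [mom]
          ring
      _ = _ := Finset.sum_sub_distrib _ _
  rw [hLHS]
  exact hRHS.symm
end
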